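/- arXiv:1804.04949 — 2 statements merged into one kernel-verified Lean document; each statement's English description precedes it below -/
import Mathlib

section
/- Let U be a finite-dimensional real vector space and let D be a subspace of U × U*. Then D equals its orthogonal D^⊥ with respect to the canonical pairing if and only if the following two conditions hold: ⟨⟨(u₁,α₁),(u₂,α₂)⟩⟩ = 0 for all (u₁,α₁),(u₂,α₂) ∈ D, and dim D = dim U. -/
/-- The canonical symmetric pairing `⟪(u₁,α₁),(u₂,α₂)⟫ = α₁(u₂) + α₂(u₁)`
on `U ⊕ U*`, as a bilinear form. -/
noncomputable def diracPairing (U : Type*) [AddCommGroup U] [Module ℝ U] :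
    LinearMap.BilinForm ℝ (U × Module.Dual ℝ U) :=
  LinearMap.mk₂ ℝ (fun x y => x.2 y.1 + y.2 x.1)
    (by intro m₁ m₂ n; simp; ring)
    (by intro c m n; simp; ring)
    (by intro m n₁ n₂; simp; ring)
    (by intro c m n; simp; ring)

/-- The orthogonal complement of a subspace `D ⊆ U ⊕ U*` with respect to the
canonical pairing. -/
noncomputable def diracOrthogonal (U : Type*) [AddCommGroup U] [Module ℝ U]
    (D : Submodule ℝ (U × Module.Dual ℝ U)) : Submodule ℝ (U × Module.Dual ℝ U) :=
  LinearMap.BilinForm.orthogonal (diracPairing U) D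

lemma diracPairing_apply (U : Type*) [AddCommGroup U] [Module ℝ U]
    (x y : U × Module.Dual ℝ U) : diracPairing U x y = x.2 y.1 + y.2 x.1 := rfl

lemma diracPairing_symm (U : Type*) [AddCommGroup U] [Module ℝ U] :
    (diracPairing U).IsSymm := by
  constructor
  intro x y
  simp [diracPairing_apply]; ring

lemma diracPairing_nondegenerate (U : Type*) [AddCommGroup U] [Module ℝ U]
    [FiniteDimensional ℝ U] : (diracPairing U).Nondegenerate := by
  refine (LinearMap.IsRefl.nondegenerate_iff_separatingLeft (diracPairing_symm U).isRefl).mpr ?_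
  intro x hx
  have h1 : x.2 = 0 := by
    ext v
    have := hx (v, 0)
    simpa [diracPairing_apply] using this
  have h2 : x.1 = 0 := by
    rw [← Module.forall_dual_apply_eq_zero_iff ℝ]
    intro β
    have := hx (0, β)
    simpa [diracPairing_apply] using this
  exact Prod.ext h2 h1

lemma finrank_prod_dual (U : Type*) [AddCommGroup U] [Module ℝ U]
    [FiniteDimensional ℝ U] :
    Module.finrank ℝ (U × Module.Dual ℝ U) = 2 * Module.finrank ℝ U := by
  rw [Module.finrank_prod, Subspace.dual_finrank_eq]; ring

/-- A subspace `D ⊆ U ⊕ U*` satisfies `D = D^⊥` (i.e. is a linear Dirac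
structure) if and only if the pairing vanishes identically on `D` and `dim D = dim U`. -/
theorem dirac_structure_iff_isotropic_and_dim
    (U : Type*) [AddCommGroup U] [Module ℝ U] [FiniteDimensional ℝ U]
    (D : Submodule ℝ (U × Module.Dual ℝ U)) :
    D = diracOrthogonal U D ↔
      ((∀ x ∈ D, ∀ y ∈ D, diracPairing U x y = 0) ∧
        Module.finrank ℝ D = Module.finrank ℝ U) := by
  have hrefl : (diracPairing U).IsRefl := (diracPairing_symm U).isRefl
  have hnd := diracPairing_nondegenerate U
  have hdim : Module.finrank ℝ (diracOrthogonal U D)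
      = Module.finrank ℝ (U × Module.Dual ℝ U) - Module.finrank ℝ D :=
    LinearMap.BilinForm.finrank_orthogonal hnd D
  constructor
  · intro hD
    have hiso : ∀ x ∈ D, ∀ y ∈ D, diracPairing U x y = 0 := by
      intro x hx y hy
      rw [hD] at hy
      exact hy x hx
    refine ⟨hiso, ?_⟩
    have := hdim
    rw [← hD, finrank_prod_dual] at this
    have hle : Module.finrank ℝ D ≤ Module.finrank ℝ (U × Module.Dual ℝ U) :=
      Submodule.finrank_le D
    rw [finrank_prod_dual] at hle
    omega
  · rintro ⟨hiso, hd⟩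
    have hle : D ≤ diracOrthogonal U D := by
      intro x hx y hy
      exact hiso y hy x hx
    apply (Submodule.eq_of_le_of_finrank_le hle ?_)
    rw [hdim, finrank_prod_dual, hd]
    omega
end

section
/- Let φ : U → V be a linear map between finite-dimensional real vector spaces and let D_V ⊆ V × V* be a linear Dirac structure on V. Then the backward image B_φ(D_V) = {(u, β ∘ φ) | u ∈ U, β ∈ V*, (φ(u), β) ∈ D_V} is a linear Dirac structure on U. -/
/-- The backward image `B_φ(D_V) = {(u, β ∘ φ) | u ∈ U, β ∈ V*, (φ(u), β) ∈ D_V}`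
of a subspace `D_V ⊆ V ⊕ V*` under a linear map `φ : U → V`. -/
noncomputable def backwardImage {U V : Type*} [AddCommGroup U] [Module ℝ U]
    [AddCommGroup V] [Module ℝ V] (φ : U →ₗ[ℝ] V)
    (D : Submodule ℝ (V × Module.Dual ℝ V)) : Submodule ℝ (U × Module.Dual ℝ U) where
  carrier := {p | ∃ β : Module.Dual ℝ V, p.2 = β.comp φ ∧ (φ p.1, β) ∈ D}
  add_mem' := by
    rintro ⟨u₁, α₁⟩ ⟨u₂, α₂⟩ ⟨β₁, h₁, hD₁⟩ ⟨β₂, h₂, hD₂⟩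
    exact ⟨β₁ + β₂, by simp at h₁ h₂; simp [h₁, h₂, LinearMap.add_comp],
      by simpa using D.add_mem hD₁ hD₂⟩
  zero_mem' := ⟨0, by simp, by first | (simp; exact D.zero_mem) | exact D.zero_mem⟩
  smul_mem' := by
    rintro c ⟨u, α⟩ ⟨β, h, hD⟩
    exact ⟨c • β, by simp at h; simp [h, LinearMap.smul_comp],
      by simpa using D.smul_mem c hD⟩

/-- Auxiliary: a functional factors through a linear map containing its kernel. -/
theorem exists_factor_aux {A B : Type*} [AddCommGroup A] [Module ℝ A]
    [AddCommGroup B] [Module ℝ B] (ψ : A →ₗ[ℝ] B) (h : A →ₗ[ℝ] ℝ)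
    (hk : LinearMap.ker ψ ≤ LinearMap.ker h) : ∃ g : B →ₗ[ℝ] ℝ, g ∘ₗ ψ = h := by
  set hb : A ⧸ LinearMap.ker ψ →ₗ[ℝ] ℝ := (LinearMap.ker ψ).liftQ h hk
  set e := ψ.quotKerEquivRange
  obtain ⟨g, hg⟩ := (hb ∘ₗ (e.symm : LinearMap.range ψ →ₗ[ℝ] A ⧸ LinearMap.ker ψ)).exists_extend
  refine ⟨g, ?_⟩
  ext a
  have h1 : (⟨ψ a, LinearMap.mem_range_self ψ a⟩ : LinearMap.range ψ)
      = e (Submodule.Quotient.mk a) := by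
    apply Subtype.ext
    simp [e, LinearMap.quotKerEquivRange_apply_mk]
  have := LinearMap.congr_fun hg (⟨ψ a, LinearMap.mem_range_self ψ a⟩ : LinearMap.range ψ)
  simp only [LinearMap.comp_apply, Submodule.subtype_apply] at this ⊢
  rw [this, h1]
  simp [hb]

set_option maxHeartbeats 1000000 in
/-- The backward image of a linear Dirac structure under a linear map
between finite-dimensional real vector spaces is a linear Dirac structure. -/
theorem backward_of_dirac_is_dirac
    {U V : Type*} [AddCommGroup U] [Module ℝ U] [FiniteDimensional ℝ U]
    [AddCommGroup V] [Module ℝ V] [FiniteDimensional ℝ V]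
    (φ : U →ₗ[ℝ] V) (DV : Submodule ℝ (V × Module.Dual ℝ V))
    (hDV : DV = diracOrthogonal V DV) :
    backwardImage φ DV = diracOrthogonal U (backwardImage φ DV) := by
  apply le_antisymm
  · -- isotropy
    rintro ⟨u₁, α₁⟩ ⟨β₁, hβ₁, hD₁⟩ ⟨u₂, α₂⟩ ⟨β₂, hβ₂, hD₂⟩
    have hiso : (φ u₁, β₁) ∈ diracOrthogonal V DV := hDV ▸ hD₁
    have key := hiso (φ u₂, β₂) hD₂
    simp only [diracPairing, LinearMap.BilinForm.IsOrtho, LinearMap.mk₂_apply] at key ⊢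
    subst hβ₁; subst hβ₂
    simp only [LinearMap.comp_apply]
    linarith
  · -- coisotropy
    rintro ⟨u, α⟩ h
    have H : ∀ (u' : U) (β' : Module.Dual ℝ V), (φ u', β') ∈ DV →
        β' (φ u) + α u' = 0 := by
      intro u' β' hm
      have := h (u', β'.comp φ) ⟨β', rfl, hm⟩
      simpa [diracPairing, LinearMap.BilinForm.IsOrtho] using this
    have hker : LinearMap.ker φ ≤ LinearMap.ker α := by
      intro u' hu'
      have h0 : (φ u', (0 : Module.Dual ℝ V)) ∈ DV := by
        rw [LinearMap.mem_ker.mp hu']; exact DV.zero_mem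
      simpa using H u' 0 h0
    obtain ⟨β₀, hβ₀⟩ := exists_factor_aux φ α hker
    set Ψ : (↥DV × U) →ₗ[ℝ] V :=
      (((LinearMap.fst ℝ V (Module.Dual ℝ V)).comp DV.subtype).comp
        (LinearMap.fst ℝ ↥DV U)) + φ.comp (LinearMap.snd ℝ ↥DV U) with hΨ
    set h' : (↥DV × U) →ₗ[ℝ] ℝ :=
      (β₀.comp φ).comp (LinearMap.snd ℝ ↥DV U) -
      (LinearMap.applyₗ (φ u)).comp
        (((LinearMap.snd ℝ V (Module.Dual ℝ V)).comp DV.subtype).comp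
          (LinearMap.fst ℝ ↥DV U)) with hh'
    have hΨapp : ∀ x : ↥DV × U, Ψ x = (x.1 : V × Module.Dual ℝ V).1 + φ x.2 :=
      fun x => rfl
    have hh'app : ∀ x : ↥DV × U,
        h' x = β₀ (φ x.2) - (x.1 : V × Module.Dual ℝ V).2 (φ u) := fun x => rfl
    have hkk : LinearMap.ker Ψ ≤ LinearMap.ker h' := by
      rintro ⟨⟨⟨w, γ⟩, hwγ⟩, u'⟩ hz
      have hz' : w + φ u' = 0 := by
        have := LinearMap.mem_ker.mp hz
        rw [hΨapp] at this
        exact this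
      have hw : w = φ (-u') := by rw [map_neg]; exact eq_neg_of_add_eq_zero_left hz'
      have hmem : (φ (-u'), γ) ∈ DV := by rw [← hw]; exact hwγ
      have hH := H (-u') γ hmem
      rw [LinearMap.mem_ker, hh'app]
      have hα : α u' = β₀ (φ u') := by rw [← hβ₀]; rfl
      simp only [map_neg] at hH
      simp only []
      linarith
    obtain ⟨f, hf⟩ := exists_factor_aux (A := ↥DV × U) (B := V) Ψ h' hkk
    refine ⟨f, ?_, ?_⟩
    · -- α = f ∘ φ
      ext u'
      have hc := LinearMap.congr_fun hf (0, u')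
      rw [LinearMap.comp_apply, hΨapp, hh'app] at hc
      simp only [Submodule.coe_zero, Prod.fst_zero, Prod.snd_zero, zero_add,
        LinearMap.zero_apply, sub_zero] at hc
      have hα : α u' = β₀ (φ u') := by rw [← hβ₀]; rfl
      simp only [LinearMap.comp_apply, hα, hc]
    · -- (φ u, f) ∈ DV
      rw [hDV]
      rw [diracOrthogonal, LinearMap.BilinForm.mem_orthogonal_iff]
      rintro ⟨w, γ⟩ hm
      have hc := LinearMap.congr_fun hf (⟨(w, γ), hm⟩, 0)
      rw [LinearMap.comp_apply, hΨapp, hh'app] at hc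
      simp only [map_zero, add_zero, sub_zero, zero_sub] at hc
      simp only [diracPairing, LinearMap.BilinForm.IsOrtho, LinearMap.mk₂_apply]
      simp only [hc]
      ring
end
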